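/- arXiv:2111.14385 — 8 statements merged into one kernel-verified Lean document; each statement's English description precedes it below -/
import Mathlib

section
/- Let F be an m×k complex matrix and B an m×l complex matrix with rank(Bᴴ·F) = rank(F), and let Z be a Moore–Penrose pseudoinverse of Bᴴ·F. Then F·(Z·Bᴴ)·F = F. Likewise, if H is an n×k complex matrix and D an n×l' complex matrix with rank(Hᴴ·D) = rank(H), and Z' is a Moore–Penrose pseudoinverse of Hᴴ·D, then Hᴴ·(D·Z')·Hᴴ = Hᴴ. -/
open Matrix

/-- Helper: matrices equal if mulVec agree. -/
lemma matrix_eq_of_mulVec_eq {a b : ℕ} {M N : Matrix (Fin a) (Fin b) ℂ}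
    (h : ∀ v, M.mulVec v = N.mulVec v) : M = N := by
  ext i j
  have := congrFun (h (Pi.single j 1)) i
  simpa using this

/-- Key lemma: if rank (G * F) = rank F and Z is a pinv-like (only need A Z A = A)
    then F * Z * G * F = F, where A = G * F. -/
lemma key1 {a b l : ℕ} (F : Matrix (Fin a) (Fin b) ℂ) (G : Matrix (Fin l) (Fin a) ℂ)
    (Z : Matrix (Fin b) (Fin l) ℂ)
    (hr : (G * F).rank = F.rank) (hz : (G * F) * Z * (G * F) = G * F) :
    F * (Z * G) * F = F := by
  set A := G * F with hA
  -- kernels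
  have hle : LinearMap.ker F.mulVecLin ≤ LinearMap.ker A.mulVecLin := by
    intro x hx
    simp only [LinearMap.mem_ker, mulVecLin_apply] at hx ⊢
    rw [hA, ← mulVec_mulVec, hx, mulVec_zero]
  have h1 := LinearMap.finrank_range_add_finrank_ker F.mulVecLin
  have h2 := LinearMap.finrank_range_add_finrank_ker A.mulVecLin
  rw [Matrix.rank, Matrix.rank] at hr
  have hker : LinearMap.ker F.mulVecLin = LinearMap.ker A.mulVecLin :=
    Submodule.eq_of_le_of_finrank_eq hle (by omega)
  apply matrix_eq_of_mulVec_eq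
  intro v
  have hx : A.mulVec (v - (Z * A).mulVec v) = 0 := by
    rw [mulVec_sub, mulVec_mulVec, ← Matrix.mul_assoc, hz, sub_self]
  have hxk : (v - (Z * A).mulVec v) ∈ LinearMap.ker F.mulVecLin := by
    rw [hker]; simpa [mulVecLin_apply] using hx
  simp only [LinearMap.mem_ker, mulVecLin_apply, mulVec_sub, sub_eq_zero] at hxk
  calc (F * (Z * G) * F).mulVec v = F.mulVec ((Z * A).mulVec v) := by
        simp only [hA, ← mulVec_mulVec]
    _ = F.mulVec v := hxk.symm

/-- `Z` is a Moore–Penrose pseudoinverse of `M`: it satisfies the four Penrose equations. -/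
def IsMoorePenrose {m n : ℕ} (M : Matrix (Fin m) (Fin n) ℂ)
    (Z : Matrix (Fin n) (Fin m) ℂ) : Prop :=
  M * Z * M = M ∧ Z * M * Z = Z ∧ (M * Z)ᴴ = M * Z ∧ (Z * M)ᴴ = Z * M

theorem generalized_inverse_equations
    {m n k l l' : ℕ}
    (F : Matrix (Fin m) (Fin k) ℂ) (B : Matrix (Fin m) (Fin l) ℂ)
    (H : Matrix (Fin n) (Fin k) ℂ) (D : Matrix (Fin n) (Fin l') ℂ)
    (Z : Matrix (Fin k) (Fin l) ℂ) (Z' : Matrix (Fin l') (Fin k) ℂ)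
    (hBF : (Bᴴ * F).rank = F.rank) (hZ : IsMoorePenrose (Bᴴ * F) Z)
    (hHD : (Hᴴ * D).rank = H.rank) (hZ' : IsMoorePenrose (Hᴴ * D) Z') :
    F * (Z * Bᴴ) * F = F ∧ Hᴴ * (D * Z') * Hᴴ = Hᴴ := by
  constructor
  · exact key1 F Bᴴ Z hBF hZ.1
  · -- transpose the second: (Hᴴ D Z' Hᴴ)ᴴ = H (Z'ᴴ Dᴴ) H; note (Hᴴ D)ᴴ = Dᴴ H
    have hr : (Dᴴ * H).rank = H.rank := by
      open scoped ComplexOrder in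
      rw [← Matrix.rank_conjTranspose (Dᴴ * H), conjTranspose_mul, conjTranspose_conjTranspose, hHD]
    have hz : (Dᴴ * H) * Z'ᴴ * (Dᴴ * H) = Dᴴ * H := by
      have := congrArg conjTranspose hZ'.1
      simpa [conjTranspose_mul, Matrix.mul_assoc] using this
    have := key1 H Dᴴ Z'ᴴ hr hz
    have := congrArg conjTranspose this
    simpa [conjTranspose_mul, Matrix.mul_assoc] using this
end

section
/- Let A be an m×n complex matrix, let F and Y be m×k complex matrices, and let H and X be n×k complex matrices. Suppose Yᴴ·F = I_k and Hᴴ·X = I_k, the column space of F equals the column space of A, and the column space of H equals the column space of Aᴴ. Then A = F·Yᴴ·A·X·Hᴴ (the reconstruction equation). -/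
open Matrix

lemma factor_of_range_le {m n k : ℕ} (A : Matrix (Fin m) (Fin n) ℂ)
    (F : Matrix (Fin m) (Fin k) ℂ)
    (h : LinearMap.range A.mulVecLin ≤ LinearMap.range F.mulVecLin) :
    ∃ N : Matrix (Fin k) (Fin n) ℂ, A = F * N := by
  have hcol : ∀ j, ∃ v : Fin k → ℂ, F *ᵥ v = fun i => A i j := by
    intro j
    have : (fun i => A i j) ∈ LinearMap.range A.mulVecLin := by
      refine ⟨Pi.single j 1, ?_⟩
      ext i
      simp [Matrix.mulVecLin, Matrix.mulVec_single]
    obtain ⟨v, hv⟩ := h this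
    exact ⟨v, hv⟩
  choose v hv using hcol
  refine ⟨Matrix.of fun l j => v j l, ?_⟩
  ext i j
  have := congrFun (hv j) i
  simp only [Matrix.mulVec, dotProduct] at this
  simp [Matrix.mul_apply, ← this]

theorem reconstruction_equation
    {m n k : ℕ}
    (A : Matrix (Fin m) (Fin n) ℂ)
    (F Y : Matrix (Fin m) (Fin k) ℂ) (H X : Matrix (Fin n) (Fin k) ℂ)
    (hYF : Yᴴ * F = 1) (hHX : Hᴴ * X = 1)
    (hF : LinearMap.range F.mulVecLin = LinearMap.range A.mulVecLin)
    (hH : LinearMap.range H.mulVecLin = LinearMap.range Aᴴ.mulVecLin) :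
    A = F * Yᴴ * A * X * Hᴴ := by
  obtain ⟨N, hN⟩ := factor_of_range_le A F hF.ge
  obtain ⟨M, hM⟩ := factor_of_range_le Aᴴ H hH.ge
  have hA : A = Mᴴ * Hᴴ := by
    have := congrArg Matrix.conjTranspose hM
    simpa [Matrix.conjTranspose_mul] using this
  have h1 : F * Yᴴ * A = A := by
    rw [hN, Matrix.mul_assoc, ← Matrix.mul_assoc Yᴴ, hYF, Matrix.one_mul]
  have h2 : A * X * Hᴴ = A := by
    rw [hA, Matrix.mul_assoc (Mᴴ * Hᴴ), Matrix.mul_assoc Mᴴ, ← Matrix.mul_assoc Hᴴ,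
      hHX, Matrix.one_mul]
  rw [h1, h2]
end

section
/- Let A be an m×n complex matrix of rank k, let F be an m×k complex matrix whose column space equals the column space of A, and let H be an n×k complex matrix whose column space equals the column space of Aᴴ. Let B be an m×l complex matrix and D an n×l' complex matrix with rank(Bᴴ·F) = k and rank(Hᴴ·D) = k, let Z be a Moore–Penrose pseudoinverse of Bᴴ·F, and let Z' be a Moore–Penrose pseudoinverse of Hᴴ·D. Then the reconstruction equation holds: A = F·(Z·Bᴴ)·A·(D·Z')·Hᴴ. -/
open Matrix

/-- An idempotent square matrix of full rank is the identity. -/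
lemma idem_full_rank_eq_one {k : ℕ} (P : Matrix (Fin k) (Fin k) ℂ)
    (h : P * P = P) (hr : P.rank = k) : P = 1 := by
  have hsurj : LinearMap.range P.mulVecLin = ⊤ := by
    apply Submodule.eq_top_of_finrank_eq
    rw [← Matrix.rank, hr, Module.finrank_fintype_fun_eq_card, Fintype.card_fin]
  have hfix : ∀ v : Fin k → ℂ, P *ᵥ v = v := by
    intro v
    obtain ⟨w, hw⟩ := (LinearMap.range_eq_top.mp hsurj) v
    have : (P * P) *ᵥ w = P *ᵥ w := by rw [h]
    rw [← Matrix.mulVec_mulVec] at this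
    rw [Matrix.mulVecLin_apply] at hw
    rw [← hw, this]
  ext i j
  have := congrFun (hfix (Pi.single j 1)) i
  rw [Matrix.mulVec_single] at this
  rw [Matrix.one_apply, ← Pi.single_apply]
  simpa using this

/-- Column-space containment gives a factorization. -/
lemma exists_factor {m n k : ℕ} (A : Matrix (Fin m) (Fin n) ℂ)
    (F : Matrix (Fin m) (Fin k) ℂ)
    (h : LinearMap.range A.mulVecLin ≤ LinearMap.range F.mulVecLin) :
    ∃ X : Matrix (Fin k) (Fin n) ℂ, A = F * X := by
  have hcol : ∀ j : Fin n, ∃ w : Fin k → ℂ, F *ᵥ w = A *ᵥ Pi.single j 1 := by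
    intro j
    obtain ⟨w, hw⟩ := h ⟨Pi.single j 1, rfl⟩
    exact ⟨w, hw⟩
  choose w hw using hcol
  refine ⟨Matrix.of fun i j => w j i, ?_⟩
  ext i j
  have := congrFun (hw j) i
  have h1 : (F * Matrix.of fun i j => w j i) *ᵥ Pi.single j 1 = A *ᵥ Pi.single j 1 := by
    rw [← Matrix.mulVec_mulVec]
    rw [show (Matrix.of fun i j => w j i) *ᵥ Pi.single j 1 = w j by
      ext i'
      simp [Matrix.mulVec_single]]
    exact hw j
  have h2 := congrFun h1 i
  rw [Matrix.mulVec_single, Matrix.mulVec_single] at h2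
  simpa using h2.symm

theorem generalized_reconstruction_equation
    {m n k l l' : ℕ}
    (A : Matrix (Fin m) (Fin n) ℂ) (hA : A.rank = k)
    (F : Matrix (Fin m) (Fin k) ℂ)
    (hF : LinearMap.range F.mulVecLin = LinearMap.range A.mulVecLin)
    (H : Matrix (Fin n) (Fin k) ℂ)
    (hH : LinearMap.range H.mulVecLin = LinearMap.range Aᴴ.mulVecLin)
    (B : Matrix (Fin m) (Fin l) ℂ) (D : Matrix (Fin n) (Fin l') ℂ)
    (hBF : (Bᴴ * F).rank = k) (hHD : (Hᴴ * D).rank = k)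
    (Z : Matrix (Fin k) (Fin l) ℂ) (hZ : IsMoorePenrose (Bᴴ * F) Z)
    (Z' : Matrix (Fin l') (Fin k) ℂ) (hZ' : IsMoorePenrose (Hᴴ * D) Z') :
    A = F * (Z * Bᴴ) * A * (D * Z') * Hᴴ := by
  obtain ⟨hZ1, hZ2, hZ3, hZ4⟩ := hZ
  obtain ⟨hZ'1, hZ'2, hZ'3, hZ'4⟩ := hZ'
  -- Z * (Bᴴ * F) = 1
  have hZBF : Z * (Bᴴ * F) = 1 := by
    apply idem_full_rank_eq_one
    · calc Z * (Bᴴ * F) * (Z * (Bᴴ * F)) = (Z * (Bᴴ * F) * Z) * (Bᴴ * F) := by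
            simp only [Matrix.mul_assoc]
        _ = Z * (Bᴴ * F) := by rw [hZ2]
    · refine le_antisymm (Matrix.rank_le_width _) ?_
      calc k = (Bᴴ * F).rank := hBF.symm
        _ = (Bᴴ * F * Z * (Bᴴ * F)).rank := by rw [hZ1]
        _ = (Bᴴ * F * (Z * (Bᴴ * F))).rank := by rw [Matrix.mul_assoc]
        _ ≤ (Z * (Bᴴ * F)).rank := Matrix.rank_mul_le_right _ _
  -- (Hᴴ * D) * Z' = 1
  have hHDZ : (Hᴴ * D) * Z' = 1 := by
    apply idem_full_rank_eq_one
    · calc (Hᴴ * D) * Z' * ((Hᴴ * D) * Z') = (Hᴴ * D * Z' * (Hᴴ * D)) * Z' := by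
            simp only [Matrix.mul_assoc]
        _ = (Hᴴ * D) * Z' := by rw [hZ'1]
    · refine le_antisymm (Matrix.rank_le_width _) ?_
      calc k = (Hᴴ * D).rank := hHD.symm
        _ = (Hᴴ * D * (Z' * (Hᴴ * D))).rank := by
            rw [← Matrix.mul_assoc, hZ'1]
        _ ≤ (Hᴴ * D * Z').rank := by
            rw [← Matrix.mul_assoc]
            exact Matrix.rank_mul_le_left _ _
  -- Factor A = F * X
  obtain ⟨X, hX⟩ := exists_factor A F (le_of_eq hF.symm)
  -- Factor Aᴴ = H * Y, so A = Yᴴ * Hᴴ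
  obtain ⟨Y, hY⟩ := exists_factor Aᴴ H (le_of_eq hH.symm)
  have hA2 : A = Yᴴ * Hᴴ := by
    calc A = Aᴴᴴ := (conjTranspose_conjTranspose A).symm
      _ = (H * Y)ᴴ := by rw [← hY]
      _ = Yᴴ * Hᴴ := by rw [conjTranspose_mul]
  calc A = F * X := hX
    _ = F * (1 : Matrix (Fin k) (Fin k) ℂ) * X := by rw [Matrix.mul_one]
    _ = F * (Z * (Bᴴ * F)) * X := by rw [hZBF]
    _ = F * (Z * Bᴴ) * (F * X) := by simp only [Matrix.mul_assoc]
    _ = F * (Z * Bᴴ) * A := by rw [← hX]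
    _ = F * (Z * Bᴴ) * (Yᴴ * Hᴴ) := by rw [hA2] 
    _ = F * (Z * Bᴴ) * Yᴴ * ((Hᴴ * D) * Z') * Hᴴ := by
        rw [hHDZ, Matrix.mul_one]; simp only [Matrix.mul_assoc]
    _ = F * (Z * Bᴴ) * (Yᴴ * Hᴴ) * (D * Z') * Hᴴ := by simp only [Matrix.mul_assoc]
    _ = F * (Z * Bᴴ) * A * (D * Z') * Hᴴ := by rw [← hA2]
end

section
/- Let A be an m×n complex matrix, let F and Y be m×k complex matrices with F·Yᴴ·F = F, and let H and X be n×k complex matrices with Hᴴ·X·Hᴴ = Hᴴ. Then the equation F·G·Hᴴ = A has a solution G (a k×k complex matrix) if and only if F·Yᴴ·A·X·Hᴴ = A. -/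
open Matrix

theorem solvability_iff_reconstruction
    {m n k : ℕ}
    (A : Matrix (Fin m) (Fin n) ℂ)
    (F Y : Matrix (Fin m) (Fin k) ℂ) (H X : Matrix (Fin n) (Fin k) ℂ)
    (hF : F * Yᴴ * F = F) (hH : Hᴴ * X * Hᴴ = Hᴴ) :
    (∃ G : Matrix (Fin k) (Fin k) ℂ, F * G * Hᴴ = A) ↔
      F * Yᴴ * A * X * Hᴴ = A := by
  constructor
  · rintro ⟨G, rfl⟩
    calc F * Yᴴ * (F * G * Hᴴ) * X * Hᴴ
        = (F * Yᴴ * F) * G * (Hᴴ * X * Hᴴ) := by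
          simp only [Matrix.mul_assoc]
      _ = F * G * Hᴴ := by rw [hF, hH]
  · intro h
    refine ⟨Yᴴ * A * X, ?_⟩
    conv_rhs => rw [← h]
    simp only [Matrix.mul_assoc]
end

section
/- Let A be an m×n complex matrix, let F and Y be m×k complex matrices with F·Yᴴ·F = F, and let H and X be n×k complex matrices with Hᴴ·X·Hᴴ = Hᴴ. Suppose moreover that F·Yᴴ·A·X·Hᴴ = A. Then for every k×k complex matrix G, one has F·G·Hᴴ = A if and only if there exists a k×k complex matrix W such that G = Yᴴ·A·X + W − Yᴴ·F·W·Hᴴ·X. -/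
open Matrix

theorem general_solution_characterization
    {m n k : ℕ}
    (A : Matrix (Fin m) (Fin n) ℂ)
    (F Y : Matrix (Fin m) (Fin k) ℂ) (H X : Matrix (Fin n) (Fin k) ℂ)
    (hF : F * Yᴴ * F = F) (hH : Hᴴ * X * Hᴴ = Hᴴ)
    (hRec : F * Yᴴ * A * X * Hᴴ = A) :
    ∀ G : Matrix (Fin k) (Fin k) ℂ,
      F * G * Hᴴ = A ↔
        ∃ W : Matrix (Fin k) (Fin k) ℂ,
          G = Yᴴ * A * X + W - Yᴴ * F * W * Hᴴ * X := by
  intro G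
  constructor
  · intro h
    refine ⟨G, ?_⟩
    rw [← h]
    simp only [Matrix.mul_assoc]
    abel
  · rintro ⟨W, rfl⟩
    have h1 : F * (Yᴴ * A * X) * Hᴴ = A := by
      calc F * (Yᴴ * A * X) * Hᴴ = F * Yᴴ * A * X * Hᴴ := by
            simp only [Matrix.mul_assoc]
        _ = A := hRec
    have h2 : F * (Yᴴ * F * W * Hᴴ * X) * Hᴴ = F * W * Hᴴ := by
      calc F * (Yᴴ * F * W * Hᴴ * X) * Hᴴ
          = (F * Yᴴ * F) * W * (Hᴴ * X * Hᴴ) := by simp only [Matrix.mul_assoc]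
        _ = F * W * Hᴴ := by rw [hF, hH]
    rw [Matrix.mul_sub, Matrix.sub_mul, Matrix.mul_add, Matrix.add_mul, h1, h2]
    abel
end

section
/- Let A be an m×n complex matrix, F an m×k complex matrix, and H an n×k complex matrix. Let Z_F be a Moore–Penrose pseudoinverse of F and Z_H a Moore–Penrose pseudoinverse of Hᴴ. Then the equation F·G·Hᴴ = A has a solution G (a k×k complex matrix) if and only if F·Z_F·A·Z_H·Hᴴ = A; and in that case, for every k×k complex matrix G, one has F·G·Hᴴ = A if and only if there exists a k×k complex matrix W such that G = Z_F·A·Z_H + W − Z_F·F·W·Hᴴ·Z_H. -/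
open Matrix

theorem penrose_solvability_and_general_solution
    {m n k : ℕ}
    (A : Matrix (Fin m) (Fin n) ℂ)
    (F : Matrix (Fin m) (Fin k) ℂ) (H : Matrix (Fin n) (Fin k) ℂ)
    (ZF : Matrix (Fin k) (Fin m) ℂ) (hZF : IsMoorePenrose F ZF)
    (ZH : Matrix (Fin n) (Fin k) ℂ) (hZH : IsMoorePenrose Hᴴ ZH) :
    ((∃ G : Matrix (Fin k) (Fin k) ℂ, F * G * Hᴴ = A) ↔
        F * ZF * A * ZH * Hᴴ = A) ∧
    (F * ZF * A * ZH * Hᴴ = A →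
      ∀ G : Matrix (Fin k) (Fin k) ℂ,
        F * G * Hᴴ = A ↔
          ∃ W : Matrix (Fin k) (Fin k) ℂ,
            G = ZF * A * ZH + W - ZF * F * W * Hᴴ * ZH) := by
  obtain ⟨hF1, -, -, -⟩ := hZF
  obtain ⟨hH1, -, -, -⟩ := hZH
  constructor
  · constructor
    · rintro ⟨G, rfl⟩
      calc F * ZF * (F * G * Hᴴ) * ZH * Hᴴ
          = (F * ZF * F) * G * (Hᴴ * ZH * Hᴴ) := by
            simp only [Matrix.mul_assoc]
        _ = F * G * Hᴴ := by rw [hF1, hH1, Matrix.mul_assoc]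
    · intro h
      exact ⟨ZF * A * ZH, by simpa only [Matrix.mul_assoc] using h⟩
  · intro hA G
    constructor
    · intro hG
      refine ⟨G, ?_⟩
      have : ZF * F * G * Hᴴ * ZH = ZF * A * ZH := by
        rw [← hG]; simp only [Matrix.mul_assoc]
      rw [this]; abel
    · rintro ⟨W, rfl⟩
      have h1 : F * (ZF * A * ZH) * Hᴴ = A := by
        simpa only [Matrix.mul_assoc] using hA
      have h2 : F * (ZF * F * W * Hᴴ * ZH) * Hᴴ = F * W * Hᴴ := by
        calc F * (ZF * F * W * Hᴴ * ZH) * Hᴴ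
            = (F * ZF * F) * W * (Hᴴ * ZH * Hᴴ) := by simp only [Matrix.mul_assoc]
          _ = F * W * Hᴴ := by rw [hF1, hH1, Matrix.mul_assoc]
      rw [Matrix.mul_sub, Matrix.mul_add, Matrix.sub_mul, Matrix.add_mul, h1, h2]
      abel
end

section
/- Let A be an m×n complex matrix, B an m×l complex matrix with rank(Bᴴ·A) = rank(A), and let Z be a Moore–Penrose pseudoinverse of Bᴴ·A; set Y' = Z·Bᴴ (an n×m matrix). If the vector c ∈ ℂ^m lies in the column space of A, then for every x ∈ ℂ^n one has A·x = c if and only if there exists y ∈ ℂ^n with x = Y'·c + (I_n − Y'·A)·y. -/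
open Matrix

theorem vector_equation_general_solution
    {m n l : ℕ}
    (A : Matrix (Fin m) (Fin n) ℂ) (B : Matrix (Fin m) (Fin l) ℂ)
    (hBA : (Bᴴ * A).rank = A.rank)
    (Z : Matrix (Fin n) (Fin l) ℂ) (hZ : IsMoorePenrose (Bᴴ * A) Z)
    (c : Fin m → ℂ) (hc : c ∈ LinearMap.range A.mulVecLin) :
    ∀ x : Fin n → ℂ,
      A.mulVec x = c ↔
        ∃ y : Fin n → ℂ,
          x = (Z * Bᴴ).mulVec c + ((1 : Matrix (Fin n) (Fin n) ℂ) - Z * Bᴴ * A).mulVec y := by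
  -- kernels of A and Bᴴ*A coincide
  have hle : LinearMap.ker A.mulVecLin ≤ LinearMap.ker (Bᴴ * A).mulVecLin := by
    intro v hv
    simp only [LinearMap.mem_ker, mulVecLin_apply] at hv ⊢
    rw [← Matrix.mulVec_mulVec, hv, Matrix.mulVec_zero]
  have hker : LinearMap.ker A.mulVecLin = LinearMap.ker (Bᴴ * A).mulVecLin := by
    refine Submodule.eq_of_le_of_finrank_le hle ?_
    have h1 := A.mulVecLin.finrank_range_add_finrank_ker
    have h2 := (Bᴴ * A).mulVecLin.finrank_range_add_finrank_ker
    have hrk : Module.finrank ℂ (LinearMap.range (Bᴴ * A).mulVecLin)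
        = Module.finrank ℂ (LinearMap.range A.mulVecLin) := hBA
    omega
  have hNZN : (Bᴴ * A) * (Z * (Bᴴ * A)) = Bᴴ * A := by
    rw [← Matrix.mul_assoc]; exact hZ.1
  -- key vector identity
  have key : ∀ v : Fin n → ℂ, (A * (Z * Bᴴ * A)).mulVec v = A.mulVec v := by
    intro v
    have hv : (Bᴴ * A).mulVec (v - (Z * (Bᴴ * A)).mulVec v) = 0 := by
      rw [Matrix.mulVec_sub, Matrix.mulVec_mulVec, hNZN, sub_self]
    have hv' : v - (Z * (Bᴴ * A)).mulVec v ∈ LinearMap.ker A.mulVecLin := by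
      rw [hker]; exact hv
    simp only [LinearMap.mem_ker, mulVecLin_apply, Matrix.mulVec_sub, sub_eq_zero,
      Matrix.mulVec_mulVec] at hv'
    rw [show A * (Z * Bᴴ * A) = A * (Z * (Bᴴ * A)) by rw [Matrix.mul_assoc Z]]
    exact hv'.symm
  -- matrix identity A (Z Bᴴ A) = A
  have hAGA : A * (Z * Bᴴ * A) = A := by
    ext i j
    have := congrFun (key (Pi.single j 1)) i
    simpa [Matrix.mulVec_single] using this
  obtain ⟨x₀, hx₀⟩ := hc
  simp only [mulVecLin_apply] at hx₀
  intro x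
  constructor
  · intro hx
    refine ⟨x, ?_⟩
    rw [← hx, Matrix.sub_mulVec, Matrix.one_mulVec, Matrix.mulVec_mulVec]
    abel
  · rintro ⟨y, rfl⟩
    rw [Matrix.mulVec_add, Matrix.sub_mulVec, Matrix.one_mulVec, Matrix.mulVec_sub]
    have h1 : A.mulVec ((Z * Bᴴ).mulVec c) = c := by
      rw [← hx₀]
      simp only [Matrix.mulVec_mulVec]
      simp only [Matrix.mul_assoc] at hAGA ⊢
      rw [hAGA]
    have h2 : A.mulVec ((Z * Bᴴ * A).mulVec y) = A.mulVec y := by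
      simp only [Matrix.mulVec_mulVec, hAGA]
    rw [h1, h2]
    abel
end

section
/- (Exactness of the generalized Nyström method) Let A be an m×n complex matrix with rank(A) = k, and let Ω_c be an n×k complex matrix and Ω_r an m×k complex matrix such that the k×k matrix Ω_rᴴ·A·Ω_c is invertible. Then A = (A·Ω_c)·(Ω_rᴴ·A·Ω_c)⁻¹·(Ω_rᴴ·A). -/
open Matrix

theorem generalized_nystrom_exact
    {m n k : ℕ}
    (A : Matrix (Fin m) (Fin n) ℂ) (hA : A.rank = k)
    (Ωc : Matrix (Fin n) (Fin k) ℂ) (Ωr : Matrix (Fin m) (Fin k) ℂ)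
    (hUnit : IsUnit (Ωrᴴ * A * Ωc)) :
    A = (A * Ωc) * (Ωrᴴ * A * Ωc)⁻¹ * (Ωrᴴ * A) := by
  -- rank of A * Ωc is k
  have hrank : (A * Ωc).rank = k := by
    have h1 : (A * Ωc).rank ≤ k := hA ▸ Matrix.rank_mul_le_left A Ωc
    have h2 : k ≤ (A * Ωc).rank := by
      have := Matrix.rank_mul_le_right Ωrᴴ (A * Ωc)
      rwa [← Matrix.mul_assoc, Matrix.rank_of_isUnit _ hUnit, Fintype.card_fin] at this
    omega
  -- ranges of mulVecLin are equal
  set f := (A * Ωc).mulVecLin with hf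
  set g := A.mulVecLin with hg
  have hle : LinearMap.range f ≤ LinearMap.range g := by
    rw [hf, Matrix.mulVecLin_mul, hg]
    exact LinearMap.range_comp_le_range _ _
  have hrange : LinearMap.range f = LinearMap.range g := by
    apply Submodule.eq_of_le_of_finrank_le hle
    show Matrix.rank A ≤ Matrix.rank (A * Ωc)
    rw [hA, hrank]
  -- factor g through f
  obtain ⟨h, hh⟩ := Module.projective_lifting_property f.rangeRestrict
      (g.codRestrict (LinearMap.range f) (fun x => hrange ▸ LinearMap.mem_range_self g x))
      f.surjective_rangeRestrict
  have hgf : f ∘ₗ h = g := by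
    refine LinearMap.ext fun x => ?_
    exact congrArg Subtype.val (LinearMap.congr_fun hh x)
  -- X := matrix of h
  set X := LinearMap.toMatrix' h with hX
  have hAX : (A * Ωc) * X = A := by
    apply Matrix.toLin'.injective
    rw [Matrix.toLin'_mul, hX, Matrix.toLin'_toMatrix', Matrix.toLin'_apply', Matrix.toLin'_apply']
    exact hgf
  -- finish
  have hinv : (Ωrᴴ * A * Ωc)⁻¹ * (Ωrᴴ * A * Ωc) = 1 :=
    Matrix.nonsing_inv_mul _ ((Matrix.isUnit_iff_isUnit_det _).mp hUnit)
  calc A = (A * Ωc) * X := hAX.symm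
    _ = (A * Ωc) * (((Ωrᴴ * A * Ωc)⁻¹ * (Ωrᴴ * A * Ωc)) * X) := by rw [hinv, Matrix.one_mul]
    _ = (A * Ωc) * (Ωrᴴ * A * Ωc)⁻¹ * (Ωrᴴ * ((A * Ωc) * X)) := by
        simp only [Matrix.mul_assoc]
    _ = (A * Ωc) * (Ωrᴴ * A * Ωc)⁻¹ * (Ωrᴴ * A) := by rw [hAX]
end
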